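/- arXiv:1110.1436 — 5 statements merged into one kernel-verified Lean document; each statement's English description precedes it below -/
import Mathlib

section
/- Let ρ : L∞(Ω,F,P) → ℝ be a convex loss-based risk measure, i.e., ρ is convex, monotone decreasing, satisfies ρ(-α) = α for all α ∈ ℝ₊ (cash-loss normalization), and ρ(X) = ρ(min(X,0)) for all X. Then ρ is cash-subadditive: for all X ∈ L∞ and all α ≥ 0, ρ(X - α) ≤ ρ(X) + α and ρ(X + α) ≥ ρ(X) - α. -/
open scoped ENNReal

open MeasureTheory

lemma aux_const_smul {Ω : Type*} [MeasurableSpace Ω] (μ : Measure Ω) [IsFiniteMeasure μ] (t c : ℝ) :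
    t • (Lp.const ⊤ μ c : Lp ℝ ⊤ μ) = Lp.const ⊤ μ (t * c) := by
  apply Lp.ext
  filter_upwards [Lp.coeFn_smul t (Lp.const ⊤ μ c : Lp ℝ ⊤ μ), Lp.coeFn_const ⊤ μ c,
    Lp.coeFn_const ⊤ μ (t * c)] with ω h1 h2 h3
  rw [h1, h3, Pi.smul_apply, h2]; simp [Function.const]

lemma aux_ae_bound {Ω : Type*} [MeasurableSpace Ω] {μ : Measure Ω} [IsFiniteMeasure μ] (X : Lp ℝ ⊤ μ) :
    ∀ᵐ ω ∂μ, ‖X ω‖ ≤ ‖X‖ := by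
  have h := MeasureTheory.ae_le_eLpNormEssSup (f := (X : Ω → ℝ)) (μ := μ)
  have hne : eLpNormEssSup (X : Ω → ℝ) μ ≠ ⊤ := by
    have := Lp.eLpNorm_ne_top X
    rwa [eLpNorm_exponent_top] at this
  filter_upwards [h] with ω hω
  have : ((‖X ω‖₊ : ENNReal)).toReal ≤ (eLpNormEssSup (X : Ω → ℝ) μ).toReal :=
    ENNReal.toReal_mono hne hω
  simpa [Lp.norm_def, eLpNorm_exponent_top] using this

/-- A convex loss-based risk measure on `L∞` is cash-subadditive:
`ρ(X - α) ≤ ρ(X) + α` and `ρ(X + α) ≥ ρ(X) - α` for `α ≥ 0`. -/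
theorem stmt_2 {Ω : Type*} [MeasurableSpace Ω] (μ : Measure Ω) [IsProbabilityMeasure μ]
    (ρ : Lp ℝ ⊤ μ → ℝ)
    (hconv : ∀ X Y : Lp ℝ ⊤ μ, ∀ α : ℝ, 0 < α → α < 1 →
      ρ (α • X + (1 - α) • Y) ≤ α * ρ X + (1 - α) * ρ Y)
    (hmono : ∀ X Y : Lp ℝ ⊤ μ, X ≤ Y → ρ Y ≤ ρ X)
    (hcash : ∀ α : ℝ, 0 ≤ α → ρ (Lp.const ⊤ μ (-α)) = α)
    (hloss : ∀ X : Lp ℝ ⊤ μ, ρ X = ρ (X ⊓ 0)) :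
    ∀ X : Lp ℝ ⊤ μ, ∀ α : ℝ, 0 ≤ α →
      ρ (X - Lp.const ⊤ μ α) ≤ ρ X + α ∧ ρ X - α ≤ ρ (X + Lp.const ⊤ μ α) := by
  have key : ∀ X : Lp ℝ ⊤ μ, ∀ a : ℝ, 0 ≤ a → ρ (X - Lp.const ⊤ μ a) ≤ ρ X + a := by
    intro X a ha
    have hbound : ∀ c : ℝ, 0 ≤ c → ρ (X - Lp.const ⊤ μ c) ≤ ‖X‖ + c := by
      intro c hc
      have hle : (Lp.const ⊤ μ (-(‖X‖ + c)) : Lp ℝ ⊤ μ) ≤ X - Lp.const ⊤ μ c := by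
        rw [← Lp.coeFn_le]
        filter_upwards [aux_ae_bound X, Lp.coeFn_sub X (Lp.const ⊤ μ c),
          Lp.coeFn_const ⊤ μ c, Lp.coeFn_const ⊤ μ (-(‖X‖ + c))] with ω h1 h2 h3 h4
        rw [h4, h2, Pi.sub_apply, h3]
        simp only [Function.const]
        have h5 := abs_le.mp (by simpa [Real.norm_eq_abs] using h1)
        linarith [h5.1]
      have h6 := hmono _ _ hle
      rwa [hcash (‖X‖ + c) (by positivity)] at h6
    have step : ∀ t : ℝ, 0 < t → t < 1 →
        ρ (X - Lp.const ⊤ μ a) ≤ (1 - t) * ρ X + t * ‖X‖ + a := by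
      intro t ht0 ht1
      have hid : (1 - t) • X + t • (X - Lp.const ⊤ μ (a / t)) = X - Lp.const ⊤ μ a := by
        rw [smul_sub, aux_const_smul, mul_div_cancel₀ _ (ne_of_gt ht0)]
        module
      have h1 := hconv X (X - Lp.const ⊤ μ (a / t)) (1 - t) (by linarith) (by linarith)
      rw [sub_sub_cancel, hid] at h1
      have h2 := hbound (a / t) (by positivity)
      have h3 : t * ρ (X - Lp.const ⊤ μ (a / t)) ≤ t * (‖X‖ + a / t) := by nlinarith
      have h4 : t * (a / t) = a := mul_div_cancel₀ _ (ne_of_gt ht0)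
      nlinarith
    refine le_of_forall_pos_le_add ?_
    intro ε hε
    set C : ℝ := max 1 (‖X‖ - ρ X) with hCdef
    have hC1 : (1:ℝ) ≤ C := le_max_left _ _
    have hC0 : (0:ℝ) < C := by linarith
    set t : ℝ := min (1/2) (ε / C) with htdef
    have ht0 : 0 < t := lt_min (by norm_num) (by positivity)
    have ht1 : t < 1 := lt_of_le_of_lt (min_le_left _ _) (by norm_num)
    have hs := step t ht0 ht1
    have htC : t * (‖X‖ - ρ X) ≤ ε := by
      have h1 : ‖X‖ - ρ X ≤ C := le_max_right _ _
      have h2 : t ≤ ε / C := min_le_right _ _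
      have h3 : t * (‖X‖ - ρ X) ≤ t * C := by nlinarith
      have h4 : t * C ≤ (ε / C) * C := by nlinarith
      have h5 : (ε / C) * C = ε := div_mul_cancel₀ _ (ne_of_gt hC0)
      linarith
    nlinarith
  intro X α hα
  refine ⟨key X α hα, ?_⟩
  have h := key (X + Lp.const ⊤ μ α) α hα
  rw [add_sub_cancel_right] at h
  linarith
end

section
/- Let ρ be a convex loss-based risk measure on L∞(Ω,F,P) satisfying cash-loss additivity: ρ(X-α) = ρ(X) + α for all X ≤ 0 and α ≥ 0. Then there exists a cash-additive, monotone decreasing, convex map ρ̃ on L∞ such that ρ(X) = ρ̃(min(X,0)) for all X; explicitly, ρ̃(X) := ρ(X - α_X) - α_X is well-defined (independent of the choice of upper bound α_X ≥ ess sup X) and has these properties. -/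
open MeasureTheory

lemma ae_le_norm_of_top {Ω : Type*} [MeasurableSpace Ω] {μ : Measure Ω}
    (f : Lp ℝ ⊤ μ) : ∀ᵐ x ∂μ, f x ≤ ‖f‖ := by
  have h := ae_le_eLpNormEssSup (μ := μ) (f := (f : Ω → ℝ))
  have hne : eLpNormEssSup (⇑f) μ ≠ ⊤ := by
    have := Lp.eLpNorm_ne_top f
    rwa [eLpNorm_exponent_top] at this
  filter_upwards [h] with x hx
  have h1 : f x ≤ ‖f x‖ := le_abs_self _
  refine h1.trans ?_
  have h2 := ENNReal.toReal_mono hne hx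
  simpa [Lp.norm_def, eLpNorm_exponent_top] using h2

lemma le_const_norm {Ω : Type*} [MeasurableSpace Ω] {μ : Measure Ω} [IsFiniteMeasure μ]
    (f : Lp ℝ ⊤ μ) : f ≤ Lp.const ⊤ μ ‖f‖ := by
  rw [← Lp.coeFn_le]
  filter_upwards [ae_le_norm_of_top f, Lp.coeFn_const (p := ⊤) (μ := μ) ‖f‖] with x h1 h2
  rw [h2]; exact h1

lemma const_le_const {Ω : Type*} [MeasurableSpace Ω] {μ : Measure Ω} [IsFiniteMeasure μ]
    {a b : ℝ} (h : a ≤ b) : Lp.const ⊤ μ a ≤ Lp.const (E := ℝ) ⊤ μ b := by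
  rw [← Lp.coeFn_le]
  filter_upwards [Lp.coeFn_const (p := ⊤) (μ := μ) a, Lp.coeFn_const (p := ⊤) (μ := μ) b]
    with x h1 h2
  rw [h1, h2]; exact h

lemma const_smul' {Ω : Type*} [MeasurableSpace Ω] {μ : Measure Ω} [IsFiniteMeasure μ]
    (α a : ℝ) : Lp.const (E := ℝ) ⊤ μ (α * a) = α • Lp.const ⊤ μ a := by
  have := map_smul (Lp.constₗ (E := ℝ) ⊤ μ ℝ) α a
  exact this

/-- A convex loss-based risk measure satisfying cash-loss additivity is the loss-based
version of a convex risk measure: there is a cash-additive, monotone decreasing, convex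
`ρ̃` with `ρ(X) = ρ̃(min(X,0))`, given explicitly by `ρ̃(X) = ρ(X - α_X) - α_X` for any
upper bound `α_X` of `X`. -/
theorem stmt_7 {Ω : Type*} [MeasurableSpace Ω] (μ : Measure Ω) [IsProbabilityMeasure μ]
    (ρ : Lp ℝ ⊤ μ → ℝ)
    (hconv : ∀ X Y : Lp ℝ ⊤ μ, ∀ α : ℝ, 0 < α → α < 1 →
      ρ (α • X + (1 - α) • Y) ≤ α * ρ X + (1 - α) * ρ Y)
    (hmono : ∀ X Y : Lp ℝ ⊤ μ, X ≤ Y → ρ Y ≤ ρ X)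
    (hcash : ∀ α : ℝ, 0 ≤ α → ρ (Lp.const ⊤ μ (-α)) = α)
    (hloss : ∀ X : Lp ℝ ⊤ μ, ρ X = ρ (X ⊓ 0))
    (hcla : ∀ X : Lp ℝ ⊤ μ, X ≤ 0 → ∀ α : ℝ, 0 ≤ α →
      ρ (X - Lp.const ⊤ μ α) = ρ X + α) :
    ∃ ρt : Lp ℝ ⊤ μ → ℝ,
      (∀ (X : Lp ℝ ⊤ μ) (c : ℝ), ρt (X + Lp.const ⊤ μ c) = ρt X - c) ∧
      (∀ X Y : Lp ℝ ⊤ μ, X ≤ Y → ρt Y ≤ ρt X) ∧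
      (∀ X Y : Lp ℝ ⊤ μ, ∀ α : ℝ, 0 < α → α < 1 →
        ρt (α • X + (1 - α) • Y) ≤ α * ρt X + (1 - α) * ρt Y) ∧
      (∀ X : Lp ℝ ⊤ μ, ρ X = ρt (X ⊓ 0)) ∧
      (∀ (X : Lp ℝ ⊤ μ) (a : ℝ), X ≤ Lp.const ⊤ μ a →
        ρt X = ρ (X - Lp.const ⊤ μ a) - a) := by
  classical
  set ρt : Lp ℝ ⊤ μ → ℝ := fun X => ρ (X - Lp.const ⊤ μ ‖X‖) - ‖X‖ with hρt
  -- key: independence of choice of bound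
  have key : ∀ (X : Lp ℝ ⊤ μ) (a : ℝ), X ≤ Lp.const ⊤ μ a →
      ρt X = ρ (X - Lp.const ⊤ μ a) - a := by
    -- first a step lemma: for a ≤ b both bounds
    have step : ∀ (X : Lp ℝ ⊤ μ) (a b : ℝ), X ≤ Lp.const ⊤ μ a → a ≤ b →
        ρ (X - Lp.const ⊤ μ b) - b = ρ (X - Lp.const ⊤ μ a) - a := by
      intro X a b hXa hab
      have hsub : X - Lp.const ⊤ μ a ≤ 0 := sub_nonpos.mpr hXa
      have h1 : Lp.const (E := ℝ) ⊤ μ b = Lp.const ⊤ μ a + Lp.const ⊤ μ (b - a) := by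
        rw [← map_add]; congr 1; ring
      have h2 : X - Lp.const ⊤ μ b
          = (X - Lp.const ⊤ μ a) - Lp.const ⊤ μ (b - a) := by
        rw [h1]; abel
      rw [h2, hcla _ hsub _ (sub_nonneg.mpr hab)]
      ring
    intro X a hXa
    rcases le_total a ‖X‖ with h | h
    · exact step X a ‖X‖ hXa h
    · exact (step X ‖X‖ a (le_const_norm X) h).symm
  refine ⟨ρt, ?_, ?_, ?_, ?_, key⟩
  · -- cash additivity
    intro X c
    have hX : X ≤ Lp.const ⊤ μ ‖X‖ := le_const_norm X
    have hXc : X + Lp.const ⊤ μ c ≤ Lp.const ⊤ μ (‖X‖ + c) := by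
      rw [map_add]
      exact add_le_add_left hX _
    rw [key _ _ hXc, key _ _ hX]
    have : X + Lp.const ⊤ μ c - Lp.const ⊤ μ (‖X‖ + c)
        = X - Lp.const ⊤ μ ‖X‖ := by
      rw [map_add]; abel
    rw [this]; ring
  · -- monotone decreasing
    intro X Y hXY
    set a := max ‖X‖ ‖Y‖ with ha
    have hXa : X ≤ Lp.const ⊤ μ a :=
      (le_const_norm X).trans (const_le_const (le_max_left _ _))
    have hYa : Y ≤ Lp.const ⊤ μ a :=
      (le_const_norm Y).trans (const_le_const (le_max_right _ _))
    rw [key _ _ hXa, key _ _ hYa]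
    have : X - Lp.const ⊤ μ a ≤ Y - Lp.const ⊤ μ a := sub_le_sub_right hXY _
    linarith [hmono _ _ this]
  · -- convexity
    intro X Y α hα0 hα1
    set a := ‖X‖; set b := ‖Y‖
    have hXa : X ≤ Lp.const ⊤ μ a := le_const_norm X
    have hYb : Y ≤ Lp.const ⊤ μ b := le_const_norm Y
    have hcomb : α • X + (1 - α) • Y ≤ Lp.const ⊤ μ (α * a + (1 - α) * b) := by
      rw [← Lp.coeFn_le]
      rw [← Lp.coeFn_le] at hXa hYb
      filter_upwards [hXa, hYb, Lp.coeFn_add (α • X) ((1 - α) • Y),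
        Lp.coeFn_smul α X, Lp.coeFn_smul (1 - α) Y,
        Lp.coeFn_const (p := (⊤ : ENNReal)) (μ := μ) a,
        Lp.coeFn_const (p := (⊤ : ENNReal)) (μ := μ) b,
        Lp.coeFn_const (p := (⊤ : ENNReal)) (μ := μ) (α * a + (1 - α) * b)]
        with x h1 h2 h3 h4 h5 h6 h7 h8
      rw [h3, h8]
      simp only [Pi.add_apply]
      rw [h4, h5]
      rw [h6] at h1; rw [h7] at h2
      simp only [Function.const_apply, Pi.smul_apply, smul_eq_mul] at *
      nlinarith
    rw [key _ _ hcomb, key _ _ hXa, key _ _ hYb]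
    have heq : α • X + (1 - α) • Y - Lp.const ⊤ μ (α * a + (1 - α) * b)
        = α • (X - Lp.const ⊤ μ a) + (1 - α) • (Y - Lp.const ⊤ μ b) := by
      rw [map_add, const_smul', const_smul', smul_sub, smul_sub]
      abel
    rw [heq]
    have := hconv (X - Lp.const ⊤ μ a) (Y - Lp.const ⊤ μ b) α hα0 hα1
    linarith
  · -- ρ X = ρt (X ⊓ 0)
    intro X
    have h0 : X ⊓ 0 ≤ Lp.const ⊤ μ 0 := by
      rw [map_zero]; exact inf_le_right
    rw [key _ _ h0, map_zero, sub_zero, sub_zero, ← hloss]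
end

section
/- Let F be a distribution function, z ∈ ℝ, ε ∈ (0,1), and define F_ε := (1-ε)F + ε·1_{[z,∞)} (mixture with a Dirac mass at z). Then the left-continuous inverse G_ε = F_ε⁻¹ satisfies: G_ε(t) = G((t-ε)/(1-ε)) for t > ε + (1-ε)F(z); G_ε(t) = G(t/(1-ε)) for t ≤ (1-ε)F(z-); and G_ε(t) = z for (1-ε)F(z-) < t ≤ ε + (1-ε)F(z), where G = F⁻¹ and F(z-) is the left limit. -/
open Filter Topology

/-- Quantile function of the mixture `F_ε = (1-ε)F + ε·1_{[z,∞)}` of a distribution `F`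
with a Dirac mass at `z`: with `G = F⁻¹` and `G_ε = F_ε⁻¹`,
`G_ε(t) = G((t-ε)/(1-ε))` for `t > ε + (1-ε)F(z)`, `G_ε(t) = G(t/(1-ε))` for
`t ≤ (1-ε)F(z-)`, and `G_ε(t) = z` for `(1-ε)F(z-) < t ≤ ε + (1-ε)F(z)`. -/
theorem stmt_15 (F : ℝ → ℝ)
    (hmono : Monotone F)
    (hrc : ∀ x, ContinuousWithinAt F (Set.Ici x) x)
    (h01 : ∀ x, 0 ≤ F x ∧ F x ≤ 1)
    (htop : Tendsto F atTop (𝓝 1))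
    (hbot : Tendsto F atBot (𝓝 0))
    (z : ℝ) (ε : ℝ) (hε0 : 0 < ε) (hε1 : ε < 1)
    (Fε : ℝ → ℝ)
    (hFε : ∀ x, Fε x = (1 - ε) * F x + ε * (if z ≤ x then 1 else 0))
    (G Gε : ℝ → ℝ)
    (hG : ∀ t, G t = sInf {x : ℝ | t ≤ F x})
    (hGε : ∀ t, Gε t = sInf {x : ℝ | t ≤ Fε x}) :
    ∀ t : ℝ, 0 < t → t < 1 →
      (ε + (1 - ε) * F z < t → Gε t = G ((t - ε) / (1 - ε))) ∧
      (t ≤ (1 - ε) * Function.leftLim F z → Gε t = G (t / (1 - ε))) ∧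
      ((1 - ε) * Function.leftLim F z < t → t ≤ ε + (1 - ε) * F z → Gε t = z) := by
  intro t ht0 ht1
  have h1ε : (0:ℝ) < 1 - ε := by linarith
  have hL : Function.leftLim F z ≤ F z := hmono.leftLim_le le_rfl
  refine ⟨?_, ?_, ?_⟩
  · intro h
    rw [hGε, hG]
    congr 1
    ext x
    simp only [Set.mem_setOf_eq, hFε]
    constructor
    · intro hx
      by_cases hzx : z ≤ x
      · simp only [if_pos hzx, mul_one] at hx
        rw [div_le_iff₀ h1ε]
        nlinarith
      · exfalso
        simp only [if_neg hzx, mul_zero, add_zero] at hx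
        have : F x ≤ F z := hmono (le_of_not_ge hzx)
        nlinarith
    · intro hx
      rw [div_le_iff₀ h1ε] at hx
      have hzx : z ≤ x := by
        by_contra hc
        have hFxz : F x ≤ F z := hmono (le_of_not_ge hc)
        nlinarith
      simp only [if_pos hzx, mul_one]
      nlinarith
  · intro h
    rw [hGε, hG]
    congr 1
    ext x
    simp only [Set.mem_setOf_eq, hFε]
    constructor
    · intro hx
      rw [div_le_iff₀ h1ε]
      by_cases hzx : z ≤ x
      · have := hL.trans (hmono hzx)
        nlinarith
      · simp only [if_neg hzx, mul_zero, add_zero] at hx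
        nlinarith
    · intro hx
      rw [div_le_iff₀ h1ε] at hx
      by_cases hzx : z ≤ x
      · simp only [if_pos hzx, mul_one]
        nlinarith
      · simp only [if_neg hzx, mul_zero, add_zero]
        nlinarith
  · intro h1 h2
    rw [hGε]
    have hset : {x : ℝ | t ≤ Fε x} = Set.Ici z := by
      ext x
      simp only [Set.mem_setOf_eq, Set.mem_Ici, hFε]
      constructor
      · intro hx
        by_contra hc
        push_neg at hc
        have hF : F x ≤ Function.leftLim F z := hmono.le_leftLim hc
        simp only [if_neg hc.not_ge, mul_zero, add_zero] at hx
        nlinarith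
      · intro hzx
        simp only [if_pos hzx, mul_one]
        have := hmono hzx
        nlinarith
    rw [hset, csInf_Ici]
end

section
/- The sensitivity function of the loss certainty equivalent ρ(F) := u⁻¹(∫ u(|min(x,0)|) dF(x)) at a distribution F in the direction of the Dirac mass at z ∈ ℝ equals S(z;F) = (u(|min(z,0)|) - u(ρ(F))) / u'(ρ(F)); that is, the limit as ε → 0+ of (ρ(εδ_z + (1-ε)F) - ρ(F))/ε equals this expression. -/
open MeasureTheory Filter Topology

/-- Sensitivity function of the loss certainty equivalent
`ρ(F) = u⁻¹(∫ u(|min(x,0)|) dF)` at a compactly supported distribution `F` in the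
direction of the Dirac mass at `z`:
`lim_{ε→0+} (ρ(εδ_z + (1-ε)F) - ρ(F))/ε = (u(|min(z,0)|) - u(ρ(F))) / u'(ρ(F))`. -/
theorem stmt_16 (u u' : ℝ → ℝ)
    (hu_mono : StrictMonoOn u (Set.Ici 0))
    (hu_deriv : ∀ x, HasDerivAt u (u' x) x)
    (hu'_cont : Continuous u')
    (hu0 : u 0 = 0)
    (ν : Measure ℝ) [IsProbabilityMeasure ν]
    (hsupp : ∃ R : ℝ, ν {x : ℝ | R < |x|} = 0)
    (ρ : Measure ℝ → ℝ)
    (hρ : ∀ m : Measure ℝ, IsProbabilityMeasure m →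
      0 ≤ ρ m ∧ u (ρ m) = ∫ x, u |min x 0| ∂m)
    (hpos : 0 < u' (ρ ν)) (z : ℝ) :
    Tendsto
      (fun ε : ℝ =>
        (ρ (ENNReal.ofReal ε • Measure.dirac z + ENNReal.ofReal (1 - ε) • ν) - ρ ν) / ε)
      (𝓝[>] 0)
      (𝓝 ((u |min z 0| - u (ρ ν)) / u' (ρ ν))) := by
  set c := ρ ν with hc
  obtain ⟨hc0, hcI⟩ := hρ ν inferInstance
  have hu_cont : Continuous u := by
    rw [continuous_iff_continuousAt]; exact fun x => (hu_deriv x).continuousAt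
  set g : ℝ → ℝ := fun x => u |min x 0| with hgdef
  have hg_cont : Continuous g :=
    hu_cont.comp ((continuous_id.min continuous_const).abs)
  set A := u |min z 0| with hAdef
  have hAz : g z = A := rfl
  -- integrability of g w.r.t. ν
  obtain ⟨R, hR⟩ := hsupp
  set R' := max R 0 with hR'
  obtain ⟨C, hC⟩ := (isCompact_Icc (a := -R') (b := R')).exists_bound_of_continuousOn
    hg_cont.continuousOn
  have hae : ∀ᵐ x ∂ν, ‖g x‖ ≤ C := by
    have h0 : ∀ᵐ x ∂ν, ¬ (R < |x|) := by
      rw [ae_iff]; simpa using hR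
    filter_upwards [h0] with x hx
    push_neg at hx
    have hx' : |x| ≤ R' := le_trans hx (le_max_left _ _)
    rw [abs_le] at hx'
    exact hC x ⟨hx'.1, hx'.2⟩
  have hgint : Integrable g ν :=
    (integrable_const C).mono' hg_cont.aestronglyMeasurable hae
  set m : ℝ → Measure ℝ :=
    fun ε => ENNReal.ofReal ε • Measure.dirac z + ENNReal.ofReal (1 - ε) • ν with hm
  set f : ℝ → ℝ := fun ε => ρ (m ε) with hf
  -- key computation
  have key : ∀ ε ∈ Set.Ioo (0:ℝ) 1, 0 ≤ f ε ∧ u (f ε) = u c + ε * (A - u c) := by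
    intro ε hε
    have hprob : IsProbabilityMeasure (m ε) := by
      constructor
      rw [hm]
      simp only [Measure.add_apply, Measure.smul_apply, smul_eq_mul, measure_univ, mul_one,
        Measure.dirac_apply_of_mem (Set.mem_univ z)]
      rw [← ENNReal.ofReal_add hε.1.le (by linarith [hε.2] : (0:ℝ) ≤ 1 - ε)]
      norm_num
    obtain ⟨h1, h2⟩ := hρ (m ε) hprob
    refine ⟨h1, ?_⟩
    have i1 : Integrable g (ENNReal.ofReal ε • Measure.dirac z) :=
      ((integrable_const (g z)).congr (ae_eq_dirac g).symm).smul_measure ENNReal.ofReal_ne_top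
    have i2 : Integrable g (ENNReal.ofReal (1 - ε) • ν) :=
      hgint.smul_measure ENNReal.ofReal_ne_top
    have hInt : ∫ x, u |min x 0| ∂(m ε) = ε * A + (1 - ε) * u c := by
      have : ∫ x, g x ∂(m ε) = ε * A + (1 - ε) * u c := by
        rw [hm, integral_add_measure i1 i2, integral_smul_measure, integral_smul_measure,
          integral_dirac, ENNReal.toReal_ofReal hε.1.le,
          ENNReal.toReal_ofReal (by linarith [hε.2] : (0:ℝ) ≤ 1 - ε), hAz, smul_eq_mul,
          smul_eq_mul, ← hgdef, ← hcI]
      exact this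
    rw [h2, hInt]; ring
  have hfil : ∀ᶠ ε in 𝓝[>] (0:ℝ), ε ∈ Set.Ioo (0:ℝ) 1 :=
    Ioo_mem_nhdsGT_of_mem ⟨le_refl 0, one_pos⟩
  -- the affine function tends to u c
  have htendu : Tendsto (fun ε : ℝ => u c + ε * (A - u c)) (𝓝[>] 0) (𝓝 (u c)) := by
    have h : Tendsto (fun ε : ℝ => u c + ε * (A - u c)) (𝓝 0) (𝓝 (u c + 0 * (A - u c))) :=
      tendsto_const_nhds.add (tendsto_id.mul tendsto_const_nhds)
    simpa using h.mono_left nhdsWithin_le_nhds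
  -- continuity: f ε → c
  have hcont : Tendsto f (𝓝[>] 0) (𝓝 c) := by
    rw [tendsto_order]
    constructor
    · intro a ha
      rcases lt_or_ge a 0 with h | h
      · filter_upwards [hfil] with ε hε
        exact lt_of_lt_of_le h (key ε hε).1
      · set a1 := (a + c) / 2 with ha1
        have ha10 : (0:ℝ) ≤ a1 := by rw [ha1]; linarith
        have ha1c : a1 < c := by rw [ha1]; linarith
        have haa1 : a < a1 := by rw [ha1]; linarith
        have hu1 : u a1 < u c := hu_mono ha10 hc0 ha1c
        have hev : ∀ᶠ ε in 𝓝[>] (0:ℝ), u a1 < u c + ε * (A - u c) :=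
          htendu.eventually (eventually_gt_nhds hu1)
        filter_upwards [hfil, hev] with ε hε hlt
        by_contra hle
        push_neg at hle
        have hkey := key ε hε
        have : u (f ε) ≤ u a1 :=
          hu_mono.monotoneOn hkey.1 ha10 (le_trans hle haa1.le)
        rw [hkey.2] at this
        linarith
    · intro b hb
      set b1 := (c + b) / 2 with hb1
      have hb10 : (0:ℝ) ≤ b1 := by rw [hb1]; linarith
      have hcb1 : c < b1 := by rw [hb1]; linarith
      have hb1b : b1 < b := by rw [hb1]; linarith
      have hu1 : u c < u b1 := hu_mono hc0 hb10 hcb1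
      have hev : ∀ᶠ ε in 𝓝[>] (0:ℝ), u c + ε * (A - u c) < u b1 :=
        htendu.eventually (eventually_lt_nhds hu1)
      filter_upwards [hfil, hev] with ε hε hlt
      by_contra hle
      push_neg at hle
      have hkey := key ε hε
      have : u b1 ≤ u (f ε) :=
        hu_mono.monotoneOn hb10 hkey.1 (le_trans hb1b.le hle)
      rw [hkey.2] at this
      linarith
  show Tendsto (fun ε : ℝ => (f ε - c) / ε) (𝓝[>] 0) (𝓝 ((A - u c) / u' c))
  by_cases hA : A = u c
  · have hev : ∀ᶠ ε in 𝓝[>] (0:ℝ), (f ε - c) / ε = 0 := by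
      filter_upwards [hfil] with ε hε
      have hkey := key ε hε
      have : u (f ε) = u c := by rw [hkey.2, hA]; ring
      have : f ε = c := hu_mono.injOn hkey.1 hc0 this
      rw [this]; simp
    rw [hA]
    simpa using Tendsto.congr' (Filter.EventuallyEq.symm hev) (tendsto_const_nhds (α := ℝ))
  · have hslope : Tendsto (slope u c) (𝓝[≠] c) (𝓝 (u' c)) :=
      hasDerivAt_iff_tendsto_slope.1 (hu_deriv c)
    have hfne : ∀ᶠ ε in 𝓝[>] (0:ℝ), f ε ≠ c := by
      filter_upwards [hfil] with ε hε hEq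
      have hkey := (key ε hε).2
      rw [hEq] at hkey
      have h0 : ε * (A - u c) = 0 := by linarith
      rcases mul_eq_zero.1 h0 with h | h
      · exact absurd h (ne_of_gt hε.1)
      · exact hA (by linarith)
    have hcomp : Tendsto f (𝓝[>] 0) (𝓝[≠] c) :=
      tendsto_nhdsWithin_of_tendsto_nhds_of_eventually_within f hcont hfne
    have h2 : Tendsto (fun ε => slope u c (f ε)) (𝓝[>] 0) (𝓝 (u' c)) :=
      hslope.comp hcomp
    have h3 : Tendsto (fun ε => (slope u c (f ε))⁻¹) (𝓝[>] 0) (𝓝 (u' c)⁻¹) :=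
      h2.inv₀ (ne_of_gt hpos)
    have hev : ∀ᶠ ε in 𝓝[>] (0:ℝ), (f ε - c) / ε = (A - u c) * (slope u c (f ε))⁻¹ := by
      filter_upwards [hfil, hfne] with ε hε hne
      have hkey := (key ε hε).2
      have hslopeval : slope u c (f ε) = ε * (A - u c) / (f ε - c) := by
        rw [slope_def_field]
        rw [hkey]
        ring_nf
      rw [hslopeval]
      have hd : f ε - c ≠ 0 := sub_ne_zero.2 hne
      have hAne : A - u c ≠ 0 := sub_ne_zero.2 hA
      have hεne : ε ≠ 0 := ne_of_gt hε.1
      field_simp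
    have hfin : Tendsto (fun ε => (A - u c) * (slope u c (f ε))⁻¹) (𝓝[>] 0)
        (𝓝 ((A - u c) * (u' c)⁻¹)) := tendsto_const_nhds.mul h3
    rw [div_eq_mul_inv]
    exact Tendsto.congr' (Filter.EventuallyEq.symm hev) hfin
end

section
/- Let dom(v) ⊆ M((0,1)) be a set of finite positive measures on (0,1) and v : dom(v) → [0,∞). Define ρ(G) := -inf over m ∈ dom(v) of {∫_{(0,1)} min(G(z),0) m(dz) + v(m)} for bounded nondecreasing G : (0,1) → ℝ. If there exist δ_n ↓ 0 and m_n ∈ dom(v) with m_n((0,δ_n)) > 0 for every n, then ρ is not sequentially continuous at G ≡ 0 with respect to pointwise convergence at continuity points: there exist bounded continuous quantile functions G_n converging to 0 pointwise on (0,1) with ρ(G_n) ≥ 1 for all n while ρ(0) = 0. -/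
open MeasureTheory Filter Topology

/-- If the domain of the penalty `v` contains measures `m_n` putting positive mass on
`(0,δ_n)` with `δ_n ↓ 0`, then the loss-based risk measure
`ρ(G) = -inf_{m ∈ dom v} {∫ min(G,0) dm + v(m)}` is not sequentially continuous at
`G ≡ 0`: there are bounded continuous monotone `G_n → 0` pointwise on `(0,1)` with
`ρ(G_n) ≥ 1` for all `n`, while `ρ(0) = 0`. -/
theorem stmt_18 (vDom : Set (Measure ℝ))
    (hdom : ∀ m ∈ vDom, m (Set.Ioo (0:ℝ) 1)ᶜ = 0 ∧ m Set.univ ≤ 1)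
    (v : Measure ℝ → ℝ)
    (hv : ∀ m ∈ vDom, 0 ≤ v m)
    (hnorm : ∀ ε : ℝ, 0 < ε → ε < 1 → ∀ c : ℝ, 0 < c →
      ∃ m ∈ vDom, 1 - ε ≤ (m Set.univ).toReal ∧ v m < c)
    (ρ : (ℝ → ℝ) → ℝ)
    (hρ : ∀ G : ℝ → ℝ,
      ρ G = -sInf ((fun m => (∫ z in Set.Ioo (0:ℝ) 1, min (G z) 0 ∂m) + v m) '' vDom))
    (δ : ℕ → ℝ) (hδpos : ∀ n, 0 < δ n) (hδ : Tendsto δ atTop (𝓝 0))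
    (m : ℕ → Measure ℝ) (hm : ∀ n, m n ∈ vDom)
    (hmpos : ∀ n, 0 < m n (Set.Ioo (0:ℝ) (δ n))) :
    ∃ G : ℕ → ℝ → ℝ,
      (∀ n, ContinuousOn (G n) (Set.Ioo (0:ℝ) 1) ∧ MonotoneOn (G n) (Set.Ioo (0:ℝ) 1) ∧
        ∃ M : ℝ, ∀ z ∈ Set.Ioo (0:ℝ) 1, |G n z| ≤ M) ∧
      (∀ z ∈ Set.Ioo (0:ℝ) 1, Tendsto (fun n => G n z) atTop (𝓝 0)) ∧
      (∀ n, 1 ≤ ρ (G n)) ∧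
      ρ (fun _ => 0) = 0 := by
  -- finiteness of all measures in the domain
  have hfin : ∀ m' ∈ vDom, IsFiniteMeasure m' := fun m' hm' =>
    ⟨lt_of_le_of_lt (hdom m' hm').2 ENNReal.one_lt_top⟩
  -- the mass of `m n` on `(0, δ n)`
  set μδ : ℕ → ℝ := fun n => (m n (Set.Ioo 0 (δ n))).toReal with hμδ
  have hμδpos : ∀ n, 0 < μδ n := by
    intro n
    have hlt : m n (Set.Ioo 0 (δ n)) < ⊤ :=
      lt_of_le_of_lt (le_trans (measure_mono (Set.subset_univ _)) (hdom _ (hm n)).2)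
        ENNReal.one_lt_top
    exact ENNReal.toReal_pos (hmpos n).ne' hlt.ne
  set β : ℕ → ℝ := fun n => (v (m n) + 1) / μδ n with hβ
  have hβpos : ∀ n, 0 < β n := fun n =>
    div_pos (by linarith [hv _ (hm n)]) (hμδpos n)
  have hβmul : ∀ n, β n * μδ n = v (m n) + 1 := fun n =>
    div_mul_cancel₀ _ (hμδpos n).ne'
  set G : ℕ → ℝ → ℝ := fun n z => min 0 (max (-β n) (β n * (z / δ n - 2))) with hG
  -- basic pointwise facts
  have hGle0 : ∀ n z, G n z ≤ 0 := fun n z => min_le_left _ _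
  have hGge : ∀ n z, -β n ≤ G n z := fun n z =>
    le_min (by linarith [(hβpos n).le]) (le_max_left _ _)
  have hGcont : ∀ n, Continuous (G n) := by
    intro n
    apply continuous_const.min
    apply continuous_const.max
    exact continuous_const.mul ((continuous_id.div_const _).sub continuous_const)
  have hGmono : ∀ n, Monotone (G n) := by
    intro n
    apply monotone_const.min
    apply monotone_const.max
    intro a b hab
    have h1 := hδpos n
    have h2 := (hβpos n).le
    dsimp only
    gcongr
  -- on `(0, δ n)` the function equals `-β n`
  have hGeq : ∀ n z, z ∈ Set.Ioo (0:ℝ) (δ n) → G n z = -β n := by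
    intro n z hz
    have h1 : z / δ n < 1 := (div_lt_one (hδpos n)).2 hz.2
    have h2 : β n * (z / δ n - 2) ≤ -β n := by nlinarith [hβpos n]
    simp only [hG]
    rw [max_eq_left h2, min_eq_right (by linarith [(hβpos n).le])]
  -- integrability
  have hint : ∀ n, ∀ m' ∈ vDom,
      Integrable (fun z => min (G n z) 0) ((m' : Measure ℝ).restrict (Set.Ioo 0 1)) := by
    intro n m' hm'
    have := hfin m' hm'
    refine Integrable.mono' (integrable_const (β n))
      ((((hGcont n).min continuous_const).aestronglyMeasurable)) ?_
    filter_upwards with z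
    rw [min_eq_left (hGle0 n z), Real.norm_eq_abs, abs_le]
    exact ⟨hGge n z, le_trans (hGle0 n z) (hβpos n).le⟩
  refine ⟨G, ?_, ?_, ?_, ?_⟩
  · intro n
    refine ⟨(hGcont n).continuousOn, (hGmono n).monotoneOn _, β n, fun z _ => ?_⟩
    rw [abs_le]
    exact ⟨hGge n z, le_trans (hGle0 n z) (hβpos n).le⟩
  · intro z hz
    have hev : ∀ᶠ n in atTop, G n z = 0 := by
      filter_upwards [hδ.eventually_lt_const (show (0:ℝ) < z / 2 by linarith [hz.1])]
        with n hn
      have h2 : (2:ℝ) ≤ z / δ n := by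
        rw [le_div_iff₀ (hδpos n)]; linarith
      have : (0:ℝ) ≤ β n * (z / δ n - 2) := by
        have := (hβpos n).le; nlinarith
      simp only [hG]
      rw [min_eq_left (le_max_of_le_right this)]
    exact Tendsto.congr' (hev.mono fun n h => h.symm) tendsto_const_nhds
  · intro n
    rw [hρ]
    set S := (fun m' => (∫ z in Set.Ioo (0:ℝ) 1, min (G n z) 0 ∂m') + v m') '' vDom with hS
    -- lower bound for all elements of S
    have hbdd : BddBelow S := by
      refine ⟨-β n, ?_⟩
      rintro x ⟨m', hm', rfl⟩
      have := hfin m' hm'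
      have h1 : -β n * (m' (Set.Ioo (0:ℝ) 1)).toReal ≤
          ∫ z in Set.Ioo (0:ℝ) 1, min (G n z) 0 ∂m' := by
        have := setIntegral_mono (integrable_const (-β n)) (hint n m' hm')
          (fun z => le_min (hGge n z) (by linarith [(hβpos n).le]))
        simpa [Measure.restrict_apply, mul_comm, measureReal_def] using this
      have h2 : (m' (Set.Ioo (0:ℝ) 1)).toReal ≤ 1 := by
        refine ENNReal.toReal_le_of_le_ofReal zero_le_one ?_
        simpa using le_trans (measure_mono (Set.subset_univ _)) (hdom m' hm').2
      have h3 : -β n * (m' (Set.Ioo (0:ℝ) 1)).toReal ≥ -β n := by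
        nlinarith [(hβpos n).le, ENNReal.toReal_nonneg (a := m' (Set.Ioo (0:ℝ) 1))]
      have := hv m' hm'
      dsimp only
      linarith
    -- the element coming from `m n` is `≤ -1`
    have hel : (∫ z in Set.Ioo (0:ℝ) 1, min (G n z) 0 ∂(m n)) + v (m n) ≤ -1 := by
      have := hfin _ (hm n)
      have hind : Integrable (fun z => (Set.Ioo (0:ℝ) (δ n)).indicator (fun _ => -β n) z)
          ((m n).restrict (Set.Ioo 0 1)) :=
        (integrable_const (-β n)).indicator measurableSet_Ioo
      have hle : ∀ z, min (G n z) 0 ≤ (Set.Ioo (0:ℝ) (δ n)).indicator (fun _ => -β n) z := by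
        intro z
        rw [min_eq_left (hGle0 n z)]
        by_cases hz : z ∈ Set.Ioo (0:ℝ) (δ n)
        · rw [Set.indicator_of_mem hz, hGeq n z hz]
        · rw [Set.indicator_of_notMem hz]; exact hGle0 n z
      have h1 : (∫ z in Set.Ioo (0:ℝ) 1, min (G n z) 0 ∂(m n)) ≤
          ∫ z in Set.Ioo (0:ℝ) 1, (Set.Ioo (0:ℝ) (δ n)).indicator (fun _ => -β n) z ∂(m n) :=
        setIntegral_mono (hint n _ (hm n)) hind (fun z => hle z)
      have h2 : (∫ z in Set.Ioo (0:ℝ) 1, (Set.Ioo (0:ℝ) (δ n)).indicator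
          (fun _ => -β n) z ∂(m n)) = -(β n * μδ n) := by
        rw [integral_indicator_const _ measurableSet_Ioo, measureReal_def, Measure.restrict_apply
          measurableSet_Ioo, measure_inter_conull (hdom _ (hm n)).1]
        simp [hμδ, mul_comm]
      rw [hβmul n] at h2
      linarith [h1.trans_eq h2]
    have hmem : (∫ z in Set.Ioo (0:ℝ) 1, min (G n z) 0 ∂(m n)) + v (m n) ∈ S :=
      ⟨m n, hm n, rfl⟩
    have : sInf S ≤ -1 := le_trans (csInf_le hbdd hmem) hel
    linarith
  · rw [hρ]
    have hzero : ∀ m' : Measure ℝ,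
        (∫ z in Set.Ioo (0:ℝ) 1, min ((0:ℝ)) 0 ∂m') + v m' = v m' := by
      intro m'; simp
    set S := (fun m' => (∫ z in Set.Ioo (0:ℝ) 1, min ((fun _ : ℝ => (0:ℝ)) z) 0 ∂m') + v m')
      '' vDom with hS
    have hSeq : S = v '' vDom := by
      simp only [hS]; congr 1; funext m'; simp
    rw [hSeq]
    obtain ⟨m₀, hm₀, -, -⟩ := hnorm (1/2) (by norm_num) (by norm_num) 1 one_pos
    have hne : (v '' vDom).Nonempty := ⟨v m₀, m₀, hm₀, rfl⟩
    have hbdd : BddBelow (v '' vDom) := ⟨0, by rintro x ⟨m', hm', rfl⟩; exact hv m' hm'⟩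
    have h1 : 0 ≤ sInf (v '' vDom) := le_csInf hne (by rintro x ⟨m', hm', rfl⟩; exact hv m' hm')
    have h2 : sInf (v '' vDom) ≤ 0 := by
      refine le_of_forall_pos_le_add ?_
      intro ε hε
      obtain ⟨m', hm', -, hvm'⟩ := hnorm (1/2) (by norm_num) (by norm_num) ε hε
      have := csInf_le hbdd (⟨m', hm', rfl⟩ : v m' ∈ v '' vDom)
      linarith
    linarith
end
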